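/- Let G be a connected graph such that every tree subgraph of G has fewer than r leaves, for some r \ge 3. Then the set of vertices of G of degree at least 3 that are pairwise at distance at least 3 from each other has size at most r. -/

import Mathlib

open Finset

/-- The set of leaves of a subgraph: vertices of the subgraph with exactly one neighbor. -/
def subgraphLeaves {V : Type*} {G : SimpleGraph V} (H : G.Subgraph) : Set V :=
  {v ∈ H.verts | (H.neighborSet v).ncard = 1}

section Aux

variable {V : Type*}

lemma aux_reachable_lift {G T : SimpleGraph V}
    (h : ∀ a b : V, G.Adj a b → T.Reachable a b) {u v : V}
    (huv : G.Reachable u v) : T.Reachable u v := by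
  obtain ⟨w⟩ := huv
  induction w with
  | nil => exact SimpleGraph.Reachable.refl _
  | cons ha _ ih => exact (h _ _ ha).trans ih

lemma aux_acyclic_sup_edge {T : SimpleGraph V} (hT : T.IsAcyclic) {u v : V}
    (h : ¬ T.Reachable u v) :
    (T ⊔ SimpleGraph.fromEdgeSet {s(u, v)}).IsAcyclic := by
  intro a c hc
  by_cases he : s(u, v) ∈ c.edges
  · have hconj := (SimpleGraph.adj_and_reachable_delete_edges_iff_exists_cycle
      (G := T ⊔ SimpleGraph.fromEdgeSet {s(u, v)}) (v := u) (w := v)).mpr ⟨a, c, hc, he⟩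
    apply h
    refine hconj.2.mono ?_
    rw [SimpleGraph.deleteEdges, sup_sdiff_right_self]
    exact sdiff_le
  · have hsub : ∀ e ∈ c.edges, e ∈ T.edgeSet := by
      intro e hmem
      have h1 := c.edges_subset_edgeSet hmem
      rw [SimpleGraph.edgeSet_sup] at h1
      rcases h1 with h1 | h1
      · exact h1
      · rw [SimpleGraph.edgeSet_fromEdgeSet] at h1
        obtain ⟨h2, -⟩ := h1
        rw [Set.mem_singleton_iff] at h2
        exact absurd (h2 ▸ hmem) he
    exact hT (c.transfer T hsub) (hc.transfer hsub)

lemma aux_iso_isTree {W : Type*} {G : SimpleGraph V} {H : SimpleGraph W}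
    (e : G ≃g H) (h : G.IsTree) : H.IsTree := by
  constructor
  · exact e.connected_iff.mp h.isConnected
  · intro a c hc
    have hinj : Function.Injective e.symm.toHom := e.symm.toEquiv.injective
    exact h.IsAcyclic (c.map e.symm.toHom) (hc.map hinj)

lemma aux_tree_leaf_bound [Fintype V] [DecidableEq V] [Nontrivial V]
    {T : SimpleGraph V} [DecidableRel T.Adj] (hT : T.IsTree) (S : Finset V)
    (hS : ∀ v ∈ S, 3 ≤ T.degree v) :
    S.card + 2 ≤ (univ.filter (fun v => T.degree v = 1)).card := by
  classical
  set L : Finset V := univ.filter (fun v => T.degree v = 1) with hL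
  -- every vertex has positive degree
  have hpos : ∀ v : V, 0 < T.degree v := by
    intro v
    obtain ⟨w, hw⟩ := exists_ne v
    obtain ⟨p⟩ := hT.isConnected.preconnected v w
    rw [T.degree_pos_iff_exists_adj]
    cases p with
    | nil => exact absurd rfl hw
    | cons ha _ => exact ⟨_, ha⟩
  have hdisj : Disjoint L S := by
    rw [Finset.disjoint_left]
    intro v hv hvS
    rw [hL, mem_filter] at hv
    have := hS v hvS
    omega
  set R : Finset V := univ \ (L ∪ S) with hR
  have hdisj2 : Disjoint (L ∪ S) R := Finset.disjoint_sdiff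
  have hunion : (L ∪ S) ∪ R = univ := by
    rw [hR, Finset.union_sdiff_of_subset (Finset.subset_univ _)]
  have hcard : L.card + S.card + R.card = Fintype.card V := by
    rw [← Finset.card_union_of_disjoint hdisj, ← Finset.card_union_of_disjoint hdisj2,
      hunion, Finset.card_univ]
  have hsum : ∑ v, T.degree v = 2 * (Fintype.card V - 1) := by
    rw [T.sum_degrees_eq_twice_card_edges, ← hT.card_edgeFinset]
    omega
  have hsplit : ∑ v, T.degree v
      = ∑ v ∈ L, T.degree v + ∑ v ∈ S, T.degree v + ∑ v ∈ R, T.degree v := by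
    rw [← Finset.sum_union hdisj, ← Finset.sum_union hdisj2, hunion]
  have hLsum : ∑ v ∈ L, T.degree v = L.card := by
    rw [Finset.sum_congr rfl (fun v hv => (mem_filter.mp hv).2), Finset.sum_const, smul_eq_mul,
      mul_one]
  have hSsum : 3 * S.card ≤ ∑ v ∈ S, T.degree v := by
    calc 3 * S.card = ∑ _v ∈ S, 3 := by rw [Finset.sum_const, smul_eq_mul, mul_comm]
    _ ≤ _ := Finset.sum_le_sum hS
  have hRsum : 2 * R.card ≤ ∑ v ∈ R, T.degree v := by
    have : ∀ v ∈ R, 2 ≤ T.degree v := by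
      intro v hv
      have hv1 : v ∉ L := fun h => (Finset.disjoint_left.mp hdisj2)
        (Finset.mem_union_left _ h) hv
      rw [hL, mem_filter] at hv1
      push_neg at hv1
      have := hpos v
      have := hv1 (mem_univ v)
      omega
    calc 2 * R.card = ∑ _v ∈ R, 2 := by rw [Finset.sum_const, smul_eq_mul, mul_comm]
    _ ≤ _ := Finset.sum_le_sum this
  have hV2 : 2 ≤ Fintype.card V := Fintype.one_lt_card
  omega

end Aux

/-- In a connected graph in which every subtree has fewer than `r` leaves (`r ≥ 3`),
any set of vertices of degree at least 3 that are pairwise at distance at least 3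
has size at most `r`. -/
theorem high_degree_scattered_bound {V : Type*} [Fintype V] [DecidableEq V]
    (G : SimpleGraph V) [DecidableRel G.Adj] (hG : G.Connected)
    (r : ℕ) (hr : 3 ≤ r)
    (hleaves : ∀ H : G.Subgraph, H.coe.IsTree → (subgraphLeaves H).ncard < r)
    (S : Finset V)
    (hdeg : ∀ v ∈ S, 3 ≤ G.degree v)
    (hdist : ∀ u ∈ S, ∀ v ∈ S, u ≠ v → 3 ≤ G.dist u v) :
    S.card ≤ r := by
  classical
  rcases S.eq_empty_or_nonempty with rfl | ⟨s₀, hs₀⟩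
  · simp
  -- the star forest F : all edges of G incident to S
  set F : SimpleGraph V := ⟨fun u v => G.Adj u v ∧ (u ∈ S ∨ v ∈ S),
    ⟨fun u v h => ⟨h.1.symm, h.2.symm⟩⟩, ⟨fun u h => G.loopless.irrefl u h.1⟩⟩ with hF
  have hFleG : F ≤ G := fun u v h => h.1
  -- two vertices of S are never adjacent
  have hSnadj : ∀ u ∈ S, ∀ v ∈ S, ¬ G.Adj u v := by
    intro u hu v hv hadj
    have hne : u ≠ v := G.ne_of_adj hadj
    have h1 : G.dist u v ≤ 1 := by
      have := G.dist_le (SimpleGraph.Walk.cons hadj SimpleGraph.Walk.nil)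
      simpa using this
    have := hdist u hu v hv hne
    omega
  -- a vertex not in S has at most one F-neighbor
  have huniq : ∀ v, v ∉ S → ∀ a b, F.Adj v a → F.Adj v b → a = b := by
    intro v hv a b ha hb
    have haS : a ∈ S := ha.2.resolve_left hv
    have hbS : b ∈ S := hb.2.resolve_left hv
    by_contra hab
    have h2 : G.dist a b ≤ 2 := by
      have := G.dist_le (SimpleGraph.Walk.cons ha.1.symm
        (SimpleGraph.Walk.cons hb.1 SimpleGraph.Walk.nil))
      simpa using this
    have := hdist a haS b hbS hab
    omega
  -- F is acyclic
  have hFacy : F.IsAcyclic := by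
    rw [SimpleGraph.isAcyclic_iff_forall_adj_isBridge]
    -- key claim, for the orientation where the second vertex is not in S
    have key : ∀ u v : V, F.Adj u v → v ∉ S → ¬(F \ SimpleGraph.fromEdgeSet {s(u, v)}).Reachable u v := by
      intro u v hadj hv hreach
      have hviso : ∀ w, ¬ (F \ SimpleGraph.fromEdgeSet {s(u, v)}).Adj v w := by
        intro w hw
        rw [SimpleGraph.sdiff_adj] at hw
        have hwu : w = u := huniq v hv w u hw.1 hadj.symm
        apply hw.2
        rw [SimpleGraph.fromEdgeSet_adj]
        subst hwu
        exact ⟨by rw [Sym2.eq_swap]; exact Set.mem_singleton _, fun h => G.ne_of_adj hadj.1 h.symm⟩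
      obtain ⟨p⟩ := hreach.symm
      cases p with
      | nil => exact G.ne_of_adj hadj.1 rfl
      | cons ha _ => exact hviso _ ha
    intro u v hadj
    rw [SimpleGraph.isBridge_iff]
    rcases hadj.2 with hu | hv
    · have hvS : v ∉ S := fun h => hSnadj u hu v h hadj.1
      exact key u v hadj hvS
    · have huS : u ∉ S := fun h => hSnadj u h v hv hadj.1
      intro hreach
      apply key v u hadj.symm huS
      rw [Sym2.eq_swap]
      exact hreach.symm
  -- the collection of admissible edge sets
  set C : Finset (Finset (Sym2 V)) := G.edgeFinset.powerset.filter
    (fun E => (SimpleGraph.fromEdgeSet (E : Set (Sym2 V))).IsAcyclic ∧ F ≤ SimpleGraph.fromEdgeSet (E : Set (Sym2 V))) with hC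
  have hFC : F.edgeFinset ∈ C := by
    rw [hC, mem_filter, Finset.mem_powerset]
    have hFE : (↑F.edgeFinset : Set (Sym2 V)) = F.edgeSet := SimpleGraph.coe_edgeFinset F
    rw [hFE, SimpleGraph.fromEdgeSet_edgeSet]
    exact ⟨SimpleGraph.edgeFinset_mono hFleG, hFacy, le_refl F⟩
  obtain ⟨E, hEC, hEmax⟩ := C.exists_max_image Finset.card ⟨_, hFC⟩
  rw [hC, mem_filter, Finset.mem_powerset] at hEC
  obtain ⟨hEsub, hTacy, hFleT⟩ := hEC
  set T : SimpleGraph V := SimpleGraph.fromEdgeSet ↑E with hTdef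
  have hTleG : T ≤ G := by
    intro u v h
    rw [hTdef, SimpleGraph.fromEdgeSet_adj] at h
    have := hEsub h.1
    rwa [SimpleGraph.mem_edgeFinset, SimpleGraph.mem_edgeSet] at this
  -- T is connected via maximality
  have hadjreach : ∀ a b : V, G.Adj a b → T.Reachable a b := by
    intro a b hab
    by_contra hr'
    have hnotmem : s(a, b) ∉ E := by
      intro hmem
      exact hr' (SimpleGraph.Adj.reachable (by
        rw [hTdef, SimpleGraph.fromEdgeSet_adj]
        exact ⟨hmem, G.ne_of_adj hab⟩))
    have hE' : insert s(a, b) E ∈ C := by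
      rw [hC, mem_filter, Finset.mem_powerset]
      have hcoe : (↑(insert s(a, b) E) : Set (Sym2 V)) = ↑E ∪ {s(a, b)} := by
        rw [Finset.coe_insert, Set.insert_eq, Set.union_comm]
      have heq : SimpleGraph.fromEdgeSet ↑(insert s(a, b) E)
          = T ⊔ SimpleGraph.fromEdgeSet {s(a, b)} := by
        rw [hcoe, SimpleGraph.fromEdgeSet_union, hTdef]
      constructor
      · exact Finset.insert_subset (by rwa [SimpleGraph.mem_edgeFinset, SimpleGraph.mem_edgeSet])
          hEsub
      constructor
      · rw [heq]; exact aux_acyclic_sup_edge hTacy hr'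
      · rw [heq]; exact hFleT.trans le_sup_left
    have := hEmax _ hE'
    rw [Finset.card_insert_of_notMem hnotmem] at this
    omega
  have hTconn : T.Connected := by
    rw [SimpleGraph.connected_iff]
    exact ⟨fun u v => aux_reachable_lift hadjreach (hG.preconnected u v), hG.nonempty⟩
  have hTtree : T.IsTree := ⟨hTconn, hTacy⟩
  -- degrees of S-vertices in T
  have hTdeg : ∀ v ∈ S, 3 ≤ T.degree v := by
    intro v hv
    have hsub : G.neighborFinset v ⊆ T.neighborFinset v := by
      intro w hw
      rw [SimpleGraph.mem_neighborFinset] at hw ⊢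
      exact hFleT ⟨hw, Or.inl hv⟩
    calc 3 ≤ G.degree v := hdeg v hv
    _ ≤ T.degree v := by
      rw [← SimpleGraph.card_neighborFinset_eq_degree, ← SimpleGraph.card_neighborFinset_eq_degree]
      exact Finset.card_le_card hsub
  -- V is nontrivial
  have hnontriv : Nontrivial V := by
    have h3 := hTdeg s₀ hs₀
    have : 0 < T.degree s₀ := by omega
    rw [T.degree_pos_iff_exists_adj] at this
    obtain ⟨w, hw⟩ := this
    exact ⟨s₀, w, T.ne_of_adj hw⟩
  -- leaf counting
  have hleafbound := aux_tree_leaf_bound hTtree S hTdeg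
  -- the subgraph
  set H : G.Subgraph := SimpleGraph.toSubgraph T hTleG with hHdef
  have hHiso : T ≃g H.coe := by
    refine ⟨(Equiv.Set.univ V).symm, ?_⟩
    intro a b
    exact Iff.rfl
  have hHtree : H.coe.IsTree := aux_iso_isTree hHiso hTtree
  have hHleaves := hleaves H hHtree
  have hset : subgraphLeaves H = ↑(univ.filter (fun v => T.degree v = 1)) := by
    ext v
    simp only [subgraphLeaves, Set.mem_setOf_eq, Finset.coe_filter, Set.mem_setOf_eq,
      Finset.mem_univ, true_and]
    constructor
    · rintro ⟨-, h⟩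
      rwa [show H.neighborSet v = ↑(T.neighborFinset v) by
          ext w; simp [hHdef, SimpleGraph.toSubgraph, SimpleGraph.Subgraph.neighborSet],
        Set.ncard_coe_finset, SimpleGraph.card_neighborFinset_eq_degree] at h
    · intro h
      refine ⟨Set.mem_univ v, ?_⟩
      rwa [show H.neighborSet v = ↑(T.neighborFinset v) by
          ext w; simp [hHdef, SimpleGraph.toSubgraph, SimpleGraph.Subgraph.neighborSet],
        Set.ncard_coe_finset, SimpleGraph.card_neighborFinset_eq_degree]
  rw [hset, Set.ncard_coe_finset] at hHleaves
  omega
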